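/- For any graph G of order n with restraint r, and for all x greater than or equal to the maximum restrained colour M_{G,r}, the function x ↦ π_r(G,x) agrees with a monic polynomial of degree n with integer coefficients that alternate in sign. -/

import Mathlib

/-- The number of proper `x`-colourings of `G` (colours `1,…,x`) permitted by the restraint `r`,
i.e. proper colourings `c` with `c v ∉ r v` for all `v`. -/
noncomputable def rcount {V : Type} [Fintype V] (G : SimpleGraph V) (r : V → Finset ℕ)
    (x : ℕ) : ℕ := by
  classical
  exact ((Fintype.piFinset fun _ : V => Finset.Icc 1 x).filter
    (fun c => (∀ v w, G.Adj v w → c v ≠ c w) ∧ ∀ v, c v ∉ r v)).card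

open Polynomial Finset

/-- Contraction of the edge `u w` into the vertex `u`, on the vertex set `V \ {w}`. -/
def contract {V : Type} (G : SimpleGraph V) (u w : V) : SimpleGraph {a : V // a ≠ w} where
  Adj a b := a.1 ≠ b.1 ∧ (G.Adj a.1 b.1 ∨ (a.1 = u ∧ G.Adj w b.1) ∨ (b.1 = u ∧ G.Adj w a.1))
  symm := by
    constructor
    rintro a b ⟨hab, h⟩
    exact ⟨fun h' => hab h'.symm, by tauto⟩
  loopless := ⟨fun a h => h.1 rfl⟩

def Alt (n : ℕ) (p : Polynomial ℤ) : Prop :=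
  p.Monic ∧ p.natDegree = n ∧ ∀ i ≤ n, 0 ≤ (-1 : ℤ) ^ (n - i) * p.coeff i

lemma alt_sub {n : ℕ} {p q : Polynomial ℤ} (hp : Alt (n + 1) p) (hq : Alt n q) :
    Alt (n + 1) (p - q) := by
  obtain ⟨hpm, hpd, hpc⟩ := hp
  obtain ⟨hqm, hqd, hqc⟩ := hq
  have hdeg : q.natDegree < p.natDegree := by omega
  refine ⟨hpm.sub_of_left (degree_lt_degree hdeg), ?_, ?_⟩
  · rw [natDegree_sub_eq_left_of_natDegree_lt hdeg, hpd]
  · intro i hi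
    rw [coeff_sub]
    rcases Nat.lt_or_ge i (n + 1) with h | h
    · have hi' : i ≤ n := by omega
      have he : n + 1 - i = (n - i) + 1 := by omega
      have h1 := hpc i hi
      have h2 := hqc i hi'
      rw [he, pow_succ] at h1 ⊢
      nlinarith [h1, h2]
    · have hieq : i = n + 1 := by omega
      have hz : q.coeff i = 0 := coeff_eq_zero_of_natDegree_lt (by omega)
      simpa [hz] using hpc i hi

lemma alt_mul {a : ℤ} (ha : 0 ≤ a) {n : ℕ} {p : Polynomial ℤ} (hp : Alt n p) :
    Alt (n + 1) ((X - C a) * p) := by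
  obtain ⟨hpm, hpd, hpc⟩ := hp
  have hm : ((X - C a) * p).Monic := (monic_X_sub_C a).mul hpm
  refine ⟨hm, ?_, ?_⟩
  · rw [(monic_X_sub_C a).natDegree_mul hpm, natDegree_X_sub_C, hpd]; omega
  · intro i hi
    rcases i with _ | j
    · rw [mul_coeff_zero, coeff_sub, coeff_X_zero, coeff_C_zero, zero_sub, neg_mul]
      have h0 := hpc 0 (by omega)
      have he : n + 1 - 0 = (n - 0) + 1 := by omega
      rw [he, pow_succ]
      simp only [Nat.sub_zero] at h0 ⊢
      nlinarith [mul_nonneg ha h0]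
    · have hco : ((X - C a) * p).coeff (j + 1) = p.coeff j - a * p.coeff (j + 1) := by
        rw [sub_mul, coeff_sub, coeff_X_mul, coeff_C_mul]
      rw [hco]
      have hj : j ≤ n := by omega
      have h1 := hpc j hj
      have he : n + 1 - (j + 1) = n - j := by omega
      rw [he]
      rcases Nat.lt_or_ge j n with h | h
      · have h2 := hpc (j + 1) (by omega)
        have he2 : n - j = (n - (j + 1)) + 1 := by omega
        rw [he2, pow_succ] at h1 ⊢
        nlinarith [mul_nonneg ha h2]
      · have hz : p.coeff (j + 1) = 0 := coeff_eq_zero_of_natDegree_lt (by omega)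
        have he3 : n - j = 0 := by omega
        rw [he3] at h1
        simp only [hz, he3]
        simpa using h1

lemma alt_one : Alt 0 (1 : Polynomial ℤ) := by
  refine ⟨monic_one, natDegree_one, ?_⟩
  intro i hi
  simp_all

lemma alt_prod {V : Type} [DecidableEq V] (a : V → ℤ) (ha : ∀ v, 0 ≤ a v) (s : Finset V) :
    Alt s.card (∏ v ∈ s, (X - C (a v))) := by
  induction s using Finset.induction_on with
  | empty => simpa using alt_one
  | insert v s hns ih =>
    rw [Finset.prod_insert hns, Finset.card_insert_of_notMem hns]
    exact alt_mul (ha v) ih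

lemma rcount_bot {V : Type} [Fintype V] (r : V → Finset ℕ) (x : ℕ) :
    rcount (⊥ : SimpleGraph V) r x = ∏ v, ((Finset.Icc 1 x) \ r v).card := by
  classical
  unfold rcount
  rw [← Fintype.card_piFinset]
  congr 1
  ext c
  simp [Fintype.mem_piFinset, Finset.mem_sdiff, forall_and]

lemma icc_card_sdiff {x : ℕ} {s : Finset ℕ} (h : s ⊆ Finset.Icc 1 x) :
    ((Finset.Icc 1 x) \ s).card = x - s.card := by
  rw [Finset.card_sdiff_of_subset h, Nat.card_Icc]; omega

lemma rcount_eq_card {V : Type} [Fintype V] [DecidableEq V] (G : SimpleGraph V)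
    (r : V → Finset ℕ) (x : ℕ)
    [inst : DecidablePred (fun c : V → ℕ => (∀ v w, G.Adj v w → c v ≠ c w) ∧ ∀ v, c v ∉ r v)] :
    rcount G r x = ((Fintype.piFinset fun _ : V => Finset.Icc 1 x).filter
      (fun c : V → ℕ => (∀ v w, G.Adj v w → c v ≠ c w) ∧ ∀ v, c v ∉ r v)).card := by
  unfold rcount
  congr 1
  congr 1
  congr 1
  exact Subsingleton.elim _ _

/-- Contraction of the edge `u w` into the vertex `u`, on the vertex set `V \ {w}`. -/

lemma sym2_ne {V : Type} {a b u w : V} (h1 : ¬(a = u ∧ b = w)) (h2 : ¬(a = w ∧ b = u)) :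
    s(a, b) ≠ s(u, w) := by
  intro h
  rw [Sym2.eq_iff] at h
  tauto

lemma del_contr {V : Type} [Fintype V] [DecidableEq V] (G : SimpleGraph V) (u w : V)
    (huw : G.Adj u w) (r : V → Finset ℕ) (x : ℕ) :
    rcount (G.deleteEdges {s(u, w)}) r x =
      rcount G r x +
        rcount (contract G u w) (fun a => if a.1 = u then r u ∪ r w else r a.1) x := by
  classical
  have hne : u ≠ w := G.ne_of_adj huw
  rw [rcount_eq_card, rcount_eq_card, rcount_eq_card]
  set S := Fintype.piFinset fun _ : V => Finset.Icc 1 x with hS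
  set A := S.filter (fun c : V → ℕ =>
      (∀ v v', (G.deleteEdges {s(u, w)}).Adj v v' → c v ≠ c v') ∧ ∀ v, c v ∉ r v) with hA
  rw [← Finset.card_filter_add_card_filter_not (p := fun c => c u ≠ c w) (s := A)]
  congr 1
  -- first part: colourings of G - e with c u ≠ c w  =  colourings of G
  · congr 1
    ext c
    simp only [Finset.mem_filter, hA, SimpleGraph.deleteEdges_adj, Set.mem_singleton_iff,
      and_assoc]
    constructor
    · rintro ⟨hc, hp, hr, hne'⟩
      refine ⟨hc, fun v v' hadj => ?_, hr⟩
      by_cases hvv : s(v, v') = s(u, w)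
      · rw [Sym2.eq_iff] at hvv
        rcases hvv with ⟨rfl, rfl⟩ | ⟨rfl, rfl⟩
        · exact hne'
        · exact fun h => hne' h.symm
      · exact hp v v' ⟨hadj, hvv⟩
    · rintro ⟨hc, hp, hr⟩
      exact ⟨hc, fun v v' hadj => hp v v' hadj.1, hr, hp u w huw⟩
  -- second part: colourings with c u = c w biject with colourings of the contraction
  · apply Finset.card_bij (fun c _ => fun a : {a : V // a ≠ w} => c a.1)
    · rintro c hc
      simp only [Finset.mem_filter, hA, not_not, SimpleGraph.deleteEdges_adj,
        Set.mem_singleton_iff, and_assoc, hS, Fintype.mem_piFinset] at hc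
      obtain ⟨hc1, hp, hr, heq⟩ := hc
      simp only [Finset.mem_filter, Fintype.mem_piFinset]
      refine ⟨fun a => hc1 a.1, ?_, ?_⟩
      · rintro a b ⟨hab, hadj⟩
        rcases hadj with h | ⟨hau, h⟩ | ⟨hbu, h⟩
        · exact hp a.1 b.1 ⟨h, sym2_ne (fun h' => b.2 h'.2) (fun h' => a.2 h'.1)⟩
        · -- a = u, G.Adj w b
          have hbu : b.1 ≠ u := fun h' => hab (by rw [hau, h'])
          have hkey : c w ≠ c b.1 :=
            hp w b.1 ⟨h, sym2_ne (fun h' => hne h'.1.symm) (fun h' => hbu h'.2)⟩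
          rw [hau, heq]; exact hkey
        · have hau : a.1 ≠ u := fun h' => hab (by rw [hbu, h'])
          have hkey : c w ≠ c a.1 :=
            hp w a.1 ⟨h, sym2_ne (fun h' => hne h'.1.symm) (fun h' => hau h'.2)⟩
          rw [hbu, heq]; exact fun h' => hkey h'.symm
      · intro a
        by_cases hau : a.1 = u
        · rw [if_pos hau, Finset.mem_union]
          rintro (h | h)
          · exact hr u (by rwa [hau] at h)
          · exact hr w (by rw [hau] at h; rwa [heq] at h)
        · simpa only [if_neg hau] using hr a.1
    · -- injectivity
      intro c hc c' hc' hcc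
      simp only [Finset.mem_filter, hA, not_not] at hc hc'
      funext v
      by_cases hv : v = w
      · subst hv
        rw [← hc.2, ← hc'.2]
        exact congrFun hcc ⟨u, hne⟩
      · exact congrFun hcc ⟨v, hv⟩
    · -- surjectivity
      intro d hd
      simp only [Finset.mem_filter, Fintype.mem_piFinset] at hd
      obtain ⟨hd1, hdp, hdr⟩ := hd
      refine ⟨fun v => if hv : v = w then d ⟨u, hne⟩ else d ⟨v, hv⟩, ?_, ?_⟩
      · simp only [Finset.mem_filter, hA, not_not, SimpleGraph.deleteEdges_adj,
          Set.mem_singleton_iff, and_assoc, hS, Fintype.mem_piFinset]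
        refine ⟨fun v => ?_, ?_, ?_, ?_⟩
        · by_cases hv : v = w
          · rw [dif_pos hv]; exact hd1 _
          · rw [dif_neg hv]; exact hd1 _
        · rintro v v' ⟨hadj, hvv⟩
          have hvne : v ≠ v' := G.ne_of_adj hadj
          by_cases hv : v = w <;> by_cases hv' : v' = w
          · exact absurd (hv.trans hv'.symm) hvne
          · subst hv
            rw [dif_pos rfl, dif_neg hv']
            have hvu : v' ≠ u := by
              rintro rfl
              exact hvv Sym2.eq_swap
            refine hdp ⟨u, hne⟩ ⟨v', hv'⟩ ⟨?_, Or.inr (Or.inl ⟨rfl, hadj⟩)⟩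
            exact fun h => hvu (by simpa using h.symm)
          · subst hv'
            rw [dif_pos rfl, dif_neg hv]
            have hvu : v ≠ u := by
              rintro rfl
              exact hvv rfl
            refine fun h => hdp ⟨v, hv⟩ ⟨u, hne⟩ ⟨?_, Or.inr (Or.inr ⟨rfl, hadj.symm⟩)⟩ h
            exact fun h' => hvu (by simpa using h')
          · rw [dif_neg hv, dif_neg hv']
            exact hdp ⟨v, hv⟩ ⟨v', hv'⟩ ⟨by simpa using hvne, Or.inl hadj⟩
        · intro v
          by_cases hv : v = w
          · rw [dif_pos hv, hv]
            have hh : d ⟨u, hne⟩ ∉ r u ∪ r w := by simpa using hdr ⟨u, hne⟩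
            rw [Finset.mem_union] at hh
            exact fun h => hh (Or.inr h)
          · rw [dif_neg hv]
            by_cases hvu : v = u
            · subst hvu
              have hh : d ⟨v, hv⟩ ∉ r v ∪ r w := by simpa using hdr ⟨v, hv⟩
              rw [Finset.mem_union] at hh
              exact fun h => hh (Or.inl h)
            · have hh := hdr ⟨v, hv⟩
              simpa only [if_neg hvu] using hh
        · simp [dif_neg hne]
      · funext a
        simp only
        rw [dif_neg a.2]

lemma exists_poly_bot {V : Type} [Fintype V] (r : V → Finset ℕ)
    (hpos : ∀ v : V, ∀ c ∈ r v, 1 ≤ c) :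
    ∃ p : Polynomial ℤ, Alt (Fintype.card V) p ∧
      ∀ x : ℕ, (Finset.univ.sup fun v : V => (r v).sup id) ≤ x →
        (rcount (⊥ : SimpleGraph V) r x : ℤ) = p.eval (x : ℤ) := by
  classical
  refine ⟨∏ v ∈ Finset.univ, (X - C ((r v).card : ℤ)), ?_, ?_⟩
  · simpa using alt_prod (fun v : V => ((r v).card : ℤ)) (fun v => by positivity) Finset.univ
  · intro x hx
    have hsub : ∀ v : V, r v ⊆ Finset.Icc 1 x := by
      intro v c hc
      rw [Finset.mem_Icc]
      refine ⟨hpos v c hc, ?_⟩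
      calc c = id c := rfl
        _ ≤ (r v).sup id := Finset.le_sup hc
        _ ≤ Finset.univ.sup fun v : V => (r v).sup id :=
            Finset.le_sup (f := fun v : V => (r v).sup id) (Finset.mem_univ v)
        _ ≤ x := hx
    have hcard : ∀ v : V, (r v).card ≤ x := by
      intro v
      have := Finset.card_le_card (hsub v)
      rwa [Nat.card_Icc, Nat.add_sub_cancel] at this
    rw [rcount_bot, eval_prod]
    push_cast
    refine Finset.prod_congr rfl fun v _ => ?_
    rw [Finset.card_sdiff_of_subset (hsub v), Nat.card_Icc, Nat.add_sub_cancel]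
    rw [Nat.cast_sub (hcard v)]
    simp

lemma main_ind (m : ℕ) : ∀ (V : Type) [Fintype V], Fintype.card V ≤ m →
    ∀ (k : ℕ) (G : SimpleGraph V), G.edgeSet.ncard ≤ k →
    ∀ (r : V → Finset ℕ), (∀ v : V, ∀ c ∈ r v, 1 ≤ c) →
    ∃ p : Polynomial ℤ, Alt (Fintype.card V) p ∧
      ∀ x : ℕ, (Finset.univ.sup fun v : V => (r v).sup id) ≤ x →
        (rcount G r x : ℤ) = p.eval (x : ℤ) := by
  induction m with
  | zero =>
    intro V _ hV k G hk r hpos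
    haveI : IsEmpty V := Fintype.card_eq_zero_iff.mp (Nat.le_zero.mp hV)
    have hbot : G = ⊥ := by
      ext a b
      exact iff_of_false (fun _ => isEmptyElim a) (fun h => h.elim)
    rw [hbot]
    exact exists_poly_bot r hpos
  | succ m ihm =>
    intro V instV hV k
    induction k with
    | zero =>
      intro G hk r hpos
      have hbot : G = ⊥ := by
        rw [← SimpleGraph.edgeSet_eq_empty]
        exact (Set.ncard_eq_zero (Set.toFinite _)).mp (Nat.le_zero.mp hk)
      rw [hbot]
      exact exists_poly_bot r hpos
    | succ k ihk =>
      intro G hk r hpos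
      classical
      by_cases hbot : G = ⊥
      · rw [hbot]; exact exists_poly_bot r hpos
      · have hne : G.edgeSet.Nonempty := by
          rw [Set.nonempty_iff_ne_empty]
          exact fun h => hbot (SimpleGraph.edgeSet_eq_empty.mp h)
        obtain ⟨e, he⟩ := hne
        induction e using Sym2.ind with
        | _ u w =>
        rw [SimpleGraph.mem_edgeSet] at he
        have hnuw : u ≠ w := G.ne_of_adj he
        -- deletion
        have hdel : (G.deleteEdges {s(u, w)}).edgeSet.ncard ≤ k := by
          rw [SimpleGraph.edgeSet_deleteEdges]
          have h1 : (G.edgeSet \ {s(u, w)}).ncard = G.edgeSet.ncard - 1 :=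
            Set.ncard_diff_singleton_of_mem (by rwa [SimpleGraph.mem_edgeSet])
          have h2 : 0 < G.edgeSet.ncard := by
            rw [Set.ncard_pos (Set.toFinite _)]
            exact ⟨s(u, w), by rwa [SimpleGraph.mem_edgeSet]⟩
          omega
        obtain ⟨p₁, hp₁, hev₁⟩ := ihk (G.deleteEdges {s(u, w)}) hdel r hpos
        -- contraction
        have hcardV : 0 < Fintype.card V := Fintype.card_pos_iff.mpr ⟨w⟩
        have hcard' : Fintype.card {a : V // a ≠ w} = Fintype.card V - 1 := by
          rw [Fintype.card_subtype_compl, Fintype.card_subtype_eq]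
        set r' : {a : V // a ≠ w} → Finset ℕ :=
          fun a => if a.1 = u then r u ∪ r w else r a.1 with hr'
        have hpos' : ∀ a : {a : V // a ≠ w}, ∀ c ∈ r' a, 1 ≤ c := by
          intro a c hc
          simp only [hr'] at hc
          by_cases hau : a.1 = u
          · rw [if_pos hau, Finset.mem_union] at hc
            rcases hc with h | h
            · exact hpos u c h
            · exact hpos w c h
          · rw [if_neg hau] at hc
            exact hpos a.1 c hc
        obtain ⟨q, hq, hevq⟩ := ihm {a : V // a ≠ w} (by omega)
          (contract G u w).edgeSet.ncard (contract G u w) le_rfl r' hpos'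
        have hsup : (Finset.univ.sup fun a : {a : V // a ≠ w} => (r' a).sup id) ≤
            Finset.univ.sup fun v : V => (r v).sup id := by
          apply Finset.sup_le
          intro a _
          simp only [hr']
          by_cases hau : a.1 = u
          · rw [if_pos hau, Finset.sup_union]
            exact sup_le (Finset.le_sup (f := fun v : V => (r v).sup id) (Finset.mem_univ u))
              (Finset.le_sup (f := fun v : V => (r v).sup id) (Finset.mem_univ w))
          · rw [if_neg hau]
            exact Finset.le_sup (f := fun v : V => (r v).sup id) (Finset.mem_univ a.1)
        -- assemble
        obtain ⟨n', hn'⟩ : ∃ n', Fintype.card V = n' + 1 :=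
          ⟨Fintype.card V - 1, by omega⟩
        refine ⟨p₁ - q, ?_, ?_⟩
        · rw [hn']
          apply alt_sub
          · rwa [hn'] at hp₁
          · have : Fintype.card {a : V // a ≠ w} = n' := by omega
            rwa [this] at hq
        · intro x hx
          have h1 := hev₁ x hx
          have h2 := hevq x (le_trans hsup hx)
          have hdc := del_contr G u w he r x
          rw [← hr'] at hdc
          have hdc' : (rcount (G.deleteEdges {s(u, w)}) r x : ℤ) =
              (rcount G r x : ℤ) + (rcount (contract G u w) r' x : ℤ) := by
            exact_mod_cast hdc
          rw [eval_sub, ← h1, ← h2]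
          omega

theorem stmt3 {V : Type} [Fintype V] (G : SimpleGraph V) (r : V → Finset ℕ)
    (hpos : ∀ v : V, ∀ c ∈ r v, 1 ≤ c) :
    ∃ p : Polynomial ℤ, p.Monic ∧ p.natDegree = Fintype.card V ∧
      (∀ i ≤ Fintype.card V, 0 ≤ (-1 : ℤ) ^ (Fintype.card V - i) * p.coeff i) ∧
      ∀ x : ℕ, (Finset.univ.sup fun v : V => (r v).sup id) ≤ x →
        (rcount G r x : ℤ) = p.eval (x : ℤ) := by
  obtain ⟨p, ⟨hm, hd, hc⟩, hev⟩ :=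
    main_ind (Fintype.card V) V le_rfl G.edgeSet.ncard G le_rfl r hpos
  exact ⟨p, hm, hd, hc, hev⟩
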